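/- Let (A, B, C) be a recollement of abelian categories where B and C have enough injective objects, let (T, F) be a tilting torsion pair in B, and suppose i* is exact. Then (i*(T), i^!(F)) is a tilting torsion pair in A; in particular i*(T) contains every injective object of A. -/

import Mathlib

open CategoryTheory Limits

universe u₁ u₂ u₃ v₁ v₂ v₃

/-- A recollement of abelian categories `(𝒜, ℬ, 𝒞)`. -/
structure Recollement (𝒜 : Type u₁) (ℬ : Type u₂) (𝒞 : Type u₃)
    [Category.{v₁} 𝒜] [Category.{v₂} ℬ] [Category.{v₃} 𝒞]
    [Abelian 𝒜] [Abelian ℬ] [Abelian 𝒞] where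
  /-- `i^* : ℬ → 𝒜` -/
  iStar : ℬ ⥤ 𝒜
  /-- `i_* : 𝒜 → ℬ` -/
  iIns : 𝒜 ⥤ ℬ
  /-- `i^! : ℬ → 𝒜` -/
  iShriek : ℬ ⥤ 𝒜
  /-- `j_! : 𝒞 → ℬ` -/
  jShriek : 𝒞 ⥤ ℬ
  /-- `j^* : ℬ → 𝒞` -/
  jStar : ℬ ⥤ 𝒞
  /-- `j_* : 𝒞 → ℬ` -/
  jIns : 𝒞 ⥤ ℬ
  iStar_additive : iStar.Additive
  iIns_additive : iIns.Additive
  iShriek_additive : iShriek.Additive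
  jShriek_additive : jShriek.Additive
  jStar_additive : jStar.Additive
  jIns_additive : jIns.Additive
  /-- the adjoint pair `(i^*, i_*)` -/
  adj₁ : iStar ⊣ iIns
  /-- the adjoint pair `(i_*, i^!)` -/
  adj₂ : iIns ⊣ iShriek
  /-- the adjoint pair `(j_!, j^*)` -/
  adj₃ : jShriek ⊣ jStar
  /-- the adjoint pair `(j^*, j_*)` -/
  adj₄ : jStar ⊣ jIns
  iIns_full : iIns.Full
  iIns_faithful : iIns.Faithful
  jShriek_full : jShriek.Full
  jShriek_faithful : jShriek.Faithful
  jIns_full : jIns.Full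
  jIns_faithful : jIns.Faithful
  /-- `Im i_* = Ker j^*` -/
  essImage_iIns_eq_ker_jStar : ∀ b : ℬ, iIns.essImage b ↔ IsZero (jStar.obj b)

/-- A pair of full subcategories (given as sets of objects, closed under
isomorphisms) `(T, F)` of an abelian category is a torsion pair if all
morphisms from `T` to `F` vanish and every object fits in a short exact
sequence with first term in `T` and third term in `F`. -/
structure IsTorsionPair {𝒜 : Type u₁} [Category.{v₁} 𝒜] [Abelian 𝒜]
    (T F : Set 𝒜) : Prop where
  mem_T_of_iso : ∀ {X Y : 𝒜}, (X ≅ Y) → X ∈ T → Y ∈ T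
  mem_F_of_iso : ∀ {X Y : 𝒜}, (X ≅ Y) → X ∈ F → Y ∈ F
  hom_eq_zero : ∀ {X Y : 𝒜}, X ∈ T → Y ∈ F → ∀ f : X ⟶ Y, f = 0
  exists_ses : ∀ M : 𝒜, ∃ (X Y : 𝒜) (f : X ⟶ M) (g : M ⟶ Y) (w : f ≫ g = 0),
    X ∈ T ∧ Y ∈ F ∧ (ShortComplex.mk f g w).ShortExact


section Aux

variable {𝒜 : Type u₁} {ℬ : Type u₂} {𝒞 : Type u₃}
    [Category.{v₁} 𝒜] [Category.{v₂} ℬ] [Category.{v₃} 𝒞]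
    [Abelian 𝒜] [Abelian ℬ] [Abelian 𝒞]

/-- A torsion class is closed under quotients. -/
lemma IsTorsionPair.mem_T_of_epi {T F : Set 𝒜} (h : IsTorsionPair T F)
    {X Q : 𝒜} (hX : X ∈ T) (p : X ⟶ Q) (hp : Epi p) : Q ∈ T := by
  obtain ⟨t, f, x, y, w, ht, hf, hse⟩ := h.exists_ses Q
  have hy : y = 0 := by
    haveI := hp
    have h0 : p ≫ y = 0 := h.hom_eq_zero hX hf _
    rw [← cancel_epi p, h0, comp_zero]
  haveI : Epi x := hse.exact.epi_f hy
  haveI : Mono x := hse.mono_f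
  haveI : IsIso x := isIso_of_mono_of_epi x
  exact h.mem_T_of_iso (asIso x) ht

/-- The unit `B ⟶ i_* i^* B` of `adj₁` is an epimorphism. -/
lemma Recollement.unit_epi (R : Recollement 𝒜 ℬ 𝒞) (B : ℬ) :
    Epi (R.adj₁.unit.app B) := by
  haveI := R.iIns_full; haveI := R.iIns_faithful
  haveI := R.iStar_additive; haveI := R.iIns_additive; haveI := R.jStar_additive
  haveI : PreservesColimitsOfSize.{0, 0} R.iStar := R.adj₁.leftAdjoint_preservesColimits
  haveI : PreservesColimitsOfSize.{0, 0} R.jStar := R.adj₄.leftAdjoint_preservesColimits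
  set η := R.adj₁.unit.app B with hηdef
  apply Preadditive.epi_of_isZero_cokernel
  haveI : IsIso (R.iStar.map η) := by
    haveI : IsIso (R.iStar.map η ≫ R.adj₁.counit.app (R.iStar.obj B)) := by
      rw [R.adj₁.left_triangle_components B]
      exact IsIso.id _
    exact IsIso.of_isIso_comp_right _ (R.adj₁.counit.app (R.iStar.obj B))
  have hA : IsZero (R.iStar.obj (cokernel η)) := by
    refine IsZero.of_iso ?_ (PreservesCokernel.iso R.iStar η)
    exact IsZero.of_iso (isZero_zero 𝒜) (cokernel.ofEpi (R.iStar.map η))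
  have hB0 : IsZero (R.jStar.obj (R.iIns.obj (R.iStar.obj B))) :=
    (R.essImage_iIns_eq_ker_jStar _).1 ⟨_, ⟨Iso.refl _⟩⟩
  haveI : Epi (R.jStar.map (cokernel.π η)) :=
    preserves_epi_of_preservesColimit R.jStar (cokernel.π η)
  have hB : IsZero (R.jStar.obj (cokernel η)) :=
    IsZero.of_epi (R.jStar.map (cokernel.π η)) hB0
  obtain ⟨a, ⟨e⟩⟩ := (R.essImage_iIns_eq_ker_jStar _).2 hB
  have ha : IsZero a := by
    have h1 : IsZero (R.iStar.obj (R.iIns.obj a)) := IsZero.of_iso hA (R.iStar.mapIso e)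
    exact IsZero.of_iso h1 (asIso (R.adj₁.counit.app a)).symm
  exact IsZero.of_iso (R.iIns.map_isZero ha) e.symm

end Aux

/-- Let `(𝒜, ℬ, 𝒞)` be a recollement with `ℬ` and `𝒞` having enough
injectives, let `(T, F)` be a tilting torsion pair in `ℬ`, and suppose `i^*`
is exact. Then `(i^*(T), i^!(F))` (essential images) is a tilting torsion pair
in `𝒜`; in particular `i^*(T)` contains every injective object of `𝒜`. -/
theorem stmt15 (𝒜 : Type u₁) (ℬ : Type u₂) (𝒞 : Type u₃)
    [Category.{v₁} 𝒜] [Category.{v₂} ℬ] [Category.{v₃} 𝒞]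
    [Abelian 𝒜] [Abelian ℬ] [Abelian 𝒞]
    [EnoughInjectives ℬ] [EnoughInjectives 𝒞] (R : Recollement 𝒜 ℬ 𝒞)
    (T F : Set ℬ) (htf : IsTorsionPair T F)
    (htilt : ∀ M : ℬ, ∃ X ∈ T, ∃ f : M ⟶ X, Mono f)
    (h₁ : PreservesFiniteLimits R.iStar)
    (h₂ : PreservesFiniteColimits R.iStar) :
    IsTorsionPair {a : 𝒜 | ∃ b ∈ T, Nonempty (R.iStar.obj b ≅ a)}
        {a : 𝒜 | ∃ b ∈ F, Nonempty (R.iShriek.obj b ≅ a)} ∧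
    (∀ M : 𝒜, ∃ X ∈ {a : 𝒜 | ∃ b ∈ T, Nonempty (R.iStar.obj b ≅ a)},
      ∃ f : M ⟶ X, Mono f) ∧
    (∀ I : 𝒜, Injective I → I ∈ {a : 𝒜 | ∃ b ∈ T, Nonempty (R.iStar.obj b ≅ a)}) := by
  classical
  haveI := R.iIns_full; haveI := R.iIns_faithful
  haveI := R.iStar_additive; haveI := R.iIns_additive; haveI := R.iShriek_additive
  haveI := R.jStar_additive
  haveI := h₁; haveI := h₂
  haveI : PreservesColimitsOfSize.{0, 0} R.jStar := R.adj₄.leftAdjoint_preservesColimits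
  set T' : Set 𝒜 := {a : 𝒜 | ∃ b ∈ T, Nonempty (R.iStar.obj b ≅ a)} with hT'
  set F' : Set 𝒜 := {a : 𝒜 | ∃ b ∈ F, Nonempty (R.iShriek.obj b ≅ a)} with hF'
  have hpair : IsTorsionPair T' F' := by
    constructor
    · rintro X Y e ⟨b, hb, ⟨e'⟩⟩
      exact ⟨b, hb, ⟨e' ≪≫ e⟩⟩
    · rintro X Y e ⟨b, hb, ⟨e'⟩⟩
      exact ⟨b, hb, ⟨e' ≪≫ e⟩⟩
    · rintro X Y ⟨t, ht, ⟨e₁⟩⟩ ⟨f', hf', ⟨e₂⟩⟩ φ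
      set ψ : R.iStar.obj t ⟶ R.iShriek.obj f' := e₁.hom ≫ φ ≫ e₂.inv with hψdef
      have hg : (R.adj₂.homEquiv (R.iStar.obj t) f').symm ψ = 0 := by
        haveI : Epi (R.adj₁.unit.app t) := R.unit_epi t
        have h0 : R.adj₁.unit.app t ≫ (R.adj₂.homEquiv (R.iStar.obj t) f').symm ψ = 0 :=
          htf.hom_eq_zero ht hf' _
        rw [← cancel_epi (R.adj₁.unit.app t), h0, comp_zero]
      have hψ : ψ = 0 := by
        have h2 := (R.adj₂.homEquiv (R.iStar.obj t) f').apply_symm_apply ψ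
        rw [hg] at h2
        rw [← h2, Adjunction.homEquiv_unit, Functor.map_zero, comp_zero]
      have : φ = e₁.inv ≫ ψ ≫ e₂.hom := by
        rw [hψdef]; simp
      rw [this, hψ, zero_comp, comp_zero]
    · intro M
      obtain ⟨X, Y, x, y, w, hX, hY, hse⟩ := htf.exists_ses (R.iIns.obj M)
      set εM : R.iStar.obj (R.iIns.obj M) ≅ M := asIso (R.adj₁.counit.app M) with hεM
      refine ⟨R.iStar.obj X, R.iStar.obj Y, R.iStar.map x ≫ εM.hom, εM.inv ≫ R.iStar.map y,
        ?_, ⟨X, hX, ⟨Iso.refl _⟩⟩, ?_, ?_⟩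
      · rw [Category.assoc, Iso.hom_inv_id_assoc, ← Functor.map_comp, w, Functor.map_zero]
      · -- `R.iStar.obj Y ∈ F'`
        haveI := hse.epi_g
        haveI : Epi (R.jStar.map y) := preserves_epi_of_preservesColimit R.jStar y
        have hzY : IsZero (R.jStar.obj Y) := by
          refine IsZero.of_epi (R.jStar.map y) ?_
          exact (R.essImage_iIns_eq_ker_jStar _).1 ⟨M, ⟨Iso.refl _⟩⟩
        obtain ⟨a, ⟨e⟩⟩ := (R.essImage_iIns_eq_ker_jStar _).2 hzY
        refine ⟨Y, hY, ⟨?_⟩⟩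
        exact R.iShriek.mapIso e.symm ≪≫ (asIso (R.adj₂.unit.app a)).symm ≪≫
          (asIso (R.adj₁.counit.app a)).symm ≪≫ R.iStar.mapIso e
      · -- short exactness
        have hmap : ((ShortComplex.mk x y w).map R.iStar).ShortExact :=
          hse.map_of_exact R.iStar
        refine ShortComplex.shortExact_of_iso ?_ hmap
        exact ShortComplex.isoMk (Iso.refl _) εM (Iso.refl _) (by exact Category.id_comp _)
          (by exact (Iso.hom_inv_id_assoc _ _).trans (Category.comp_id _).symm)
  have htilt' : ∀ M : 𝒜, ∃ X ∈ T', ∃ f : M ⟶ X, Mono f := by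
    intro M
    obtain ⟨X, hX, m, hm⟩ := htilt (R.iIns.obj M)
    haveI := hm
    haveI : Mono (R.iStar.map m) := preserves_mono_of_preservesLimit R.iStar m
    refine ⟨R.iStar.obj X, ⟨X, hX, ⟨Iso.refl _⟩⟩,
      (asIso (R.adj₁.counit.app M)).inv ≫ R.iStar.map m, ?_⟩
    exact mono_comp _ _
  refine ⟨hpair, htilt', ?_⟩
  intro I hI
  obtain ⟨X, hX, m, hm⟩ := htilt' I
  haveI := hm; haveI := hI
  have hfac : m ≫ Injective.factorThru (𝟙 I) m = 𝟙 I := Injective.comp_factorThru (𝟙 I) m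
  have hepi : Epi (Injective.factorThru (𝟙 I) m) := by
    haveI : Epi (m ≫ Injective.factorThru (𝟙 I) m) := by rw [hfac]; infer_instance
    exact epi_of_epi m _
  exact hpair.mem_T_of_epi hX (Injective.factorThru (𝟙 I) m) hepi
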